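/- Let H be Hermitian on ℋ, let x and p be the position and momentum operators of a work storage system satisfying [x,p]=i, and for a unitary U on ℋ define V = ∫dq e^{iqH} U e^{-iqH} ⊗ |q⟩_p⟨q|_p, where |q⟩_p are momentum eigenstates. Then V is unitary, commutes with H⊗I + I⊗x (total energy conservation), and commutes with I⊗p (translation invariance). -/

import Mathlib

open Matrix

/-- `e^{iθH}` for a real parameter `θ` and a matrix `H`. -/
noncomputable def expI {n : Type*} [Fintype n] [DecidableEq n]
    (H : Matrix n n ℂ) (θ : ℝ) : Matrix n n ℂ :=
  NormedSpace.exp (((θ : ℂ) * Complex.I) • H)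

/-- The Kitaev construction `V = ∫dq e^{iqH} U e^{-iqH} ⊗ |q⟩_p⟨q|_p`, realized in the
momentum representation of the work storage: a wavefunction is `ψ : ℝ → (n → ℂ)` and
`(Vψ)(q) = e^{iqH} U e^{-iqH} ψ(q)`. -/
noncomputable def kitaevV {n : Type*} [Fintype n] [DecidableEq n]
    (H U : Matrix n n ℂ) (ψ : ℝ → (n → ℂ)) : ℝ → (n → ℂ) :=
  fun q => (expI H q * U * expI H (-q)).mulVec (ψ q)

/-- The unitary `e^{iθ(H⊗I + I⊗x)}` in the momentum representation: since
`e^{iθx}|q⟩_p = |q+θ⟩_p`, it acts as `(E_θψ)(q) = e^{iθH} ψ(q-θ)`. -/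
noncomputable def energyShift {n : Type*} [Fintype n] [DecidableEq n]
    (H : Matrix n n ℂ) (θ : ℝ) (ψ : ℝ → (n → ℂ)) : ℝ → (n → ℂ) :=
  fun q => (expI H θ).mulVec (ψ (q - θ))

lemma expI_add {n : Type*} [Fintype n] [DecidableEq n]
    (H : Matrix n n ℂ) (a b : ℝ) : expI H a * expI H b = expI H (a + b) := by
  unfold expI
  rw [← Matrix.exp_add_of_commute _ _ (((Commute.refl H).smul_left _).smul_right _),
    ← add_smul]
  congr 2
  push_cast
  ring

lemma expI_zero {n : Type*} [Fintype n] [DecidableEq n]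
    (H : Matrix n n ℂ) : expI H 0 = 1 := by
  simp [expI, NormedSpace.exp_zero]

lemma expI_star {n : Type*} [Fintype n] [DecidableEq n]
    (H : Matrix n n ℂ) (hH : H.IsHermitian) (q : ℝ) :
    star (expI H q) = expI H (-q) := by
  have : (expI H q)ᴴ = expI H (-q) := by
    unfold expI
    rw [← Matrix.exp_conjTranspose (((q : ℂ) * Complex.I) • H), Matrix.conjTranspose_smul, hH.eq]
    congr 1
    simp [Complex.ext_iff]
  exact this

lemma expI_mem_unitary {n : Type*} [Fintype n] [DecidableEq n]
    (H : Matrix n n ℂ) (hH : H.IsHermitian) (q : ℝ) :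
    expI H q ∈ Matrix.unitaryGroup n ℂ := by
  constructor
  · rw [expI_star H hH, expI_add]
    simpa using expI_zero H
  · rw [expI_star H hH, expI_add]
    simpa using expI_zero H

/-- for Hermitian `H` and unitary `U`, the Kitaev operator
`V = ∫dq e^{iqH}Ue^{-iqH} ⊗ |q⟩_p⟨q|_p` is unitary (each momentum-fiber matrix
`e^{iqH}Ue^{-iqH}` is unitary), commutes with `I⊗p` (multiplication by the momentum
variable), and commutes with the total energy `H⊗I + I⊗x` (conjugation by
`e^{iθ(H⊗I+I⊗x)}` fixes `V` for every `θ`). -/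
theorem kitaevV_unitary_energyConserving_translationInvariant
    {n : Type*} [Fintype n] [DecidableEq n]
    (H U : Matrix n n ℂ) (hH : H.IsHermitian) (hU : U ∈ Matrix.unitaryGroup n ℂ) :
    (∀ q : ℝ, expI H q * U * expI H (-q) ∈ Matrix.unitaryGroup n ℂ) ∧
    (∀ ψ : ℝ → (n → ℂ),
      kitaevV H U (fun q => (Complex.ofReal q) • ψ q) = fun q => (Complex.ofReal q) • kitaevV H U ψ q) ∧
    (∀ θ : ℝ, ∀ ψ : ℝ → (n → ℂ),
      energyShift H θ (kitaevV H U (energyShift H (-θ) ψ)) = kitaevV H U ψ) := by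
  refine ⟨fun q => ?_, fun ψ => ?_, fun θ ψ => ?_⟩
  · exact mul_mem (mul_mem (expI_mem_unitary H hH q) hU) (expI_mem_unitary H hH (-q))
  · funext q
    simp [kitaevV, Matrix.mulVec_smul]
  · funext q
    have harg : q - θ - -θ = q := by ring
    simp only [energyShift, kitaevV, harg, Matrix.mulVec_mulVec]
    congr 1
    have h1 : expI H θ * expI H (q - θ) = expI H q := by
      rw [expI_add]; congr 1; ring
    have h2 : expI H (-(q - θ)) * expI H (-θ) = expI H (-q) := by
      rw [expI_add]; congr 1; ring
    simp only [mul_assoc]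
    rw [h2, ← mul_assoc, h1]
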